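/- arXiv:1501.04647 — 2 statements merged into one kernel-verified Lean document; each statement's English description precedes it below -/
import Mathlib

section
/- For any finite simple graph H of order n ≥ 2, adim_2(K_1 + H) ≤ adim_2(H) + 2. -/
open Finset

namespace AdjDim

noncomputable section
open Classical

variable {V W : Type*}

/-- Truncated distance `d_{G,2}(x,y) = min(d_G(x,y), 2)`:
`0` if `x = y`, `1` if `x` and `y` are adjacent, and `2` otherwise. -/
def d2 (G : SimpleGraph V) (x y : V) : ℕ :=
  if x = y then 0 else if G.Adj x y then 1 else 2

/-- `S` is a `k`-adjacency generator for `G`: every pair of distinct vertices is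
distinguished (w.r.t. `d_{G,2}`) by at least `k` vertices of `S`. -/
def IsKAdjGen (G : SimpleGraph V) [Fintype V] (k : ℕ) (S : Finset V) : Prop :=
  ∀ x y : V, x ≠ y → k ≤ (S.filter (fun w => d2 G x w ≠ d2 G y w)).card

/-- The `k`-adjacency dimension of `G`: the minimum cardinality of a
`k`-adjacency generator. -/
def adim (G : SimpleGraph V) [Fintype V] (k : ℕ) : ℕ :=
  sInf {n | ∃ S : Finset V, IsKAdjGen G k S ∧ S.card = n}

/-- `B` is a `k`-adjacency basis of `G`: a `k`-adjacency generator of minimum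
cardinality. -/
def IsKAdjBasis (G : SimpleGraph V) [Fintype V] (k : ℕ) (B : Finset V) : Prop :=
  IsKAdjGen G k B ∧ B.card = adim G k

/-- `G` is `k`-adjacency dimensional: `k` is the largest integer for which a
`k`-adjacency generator exists. -/
def IsKAdjDimensional (G : SimpleGraph V) [Fintype V] (k : ℕ) : Prop :=
  (∃ S : Finset V, IsKAdjGen G k S) ∧
    ∀ k' : ℕ, k < k' → ¬ ∃ S : Finset V, IsKAdjGen G k' S

/-- `C_G(x,y)`: the set of vertices distinguishing `x` and `y` w.r.t. `d_{G,2}`. -/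
def CSet (G : SimpleGraph V) [Fintype V] (x y : V) : Finset V :=
  univ.filter (fun z => d2 G x z ≠ d2 G y z)

/-- `C(G) = min_{x ≠ y} |C_G(x,y)|`. -/
def Cmin (G : SimpleGraph V) [Fintype V] : ℕ :=
  sInf {m | ∃ x y : V, x ≠ y ∧ (CSet G x y).card = m}

/-- `C_k(G)`: the union of the sets `C_G(x,y)` over pairs of distinct vertices
with `|C_G(x,y)| = k`. -/
def Ck (G : SimpleGraph V) [Fintype V] (k : ℕ) : Finset V :=
  univ.filter (fun z => ∃ x y : V, x ≠ y ∧ (CSet G x y).card = k ∧ z ∈ CSet G x y)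

/-- Two distinct vertices `x, y` are twins: every other vertex is at the same
truncated distance from both. -/
def Twins (G : SimpleGraph V) (x y : V) : Prop :=
  x ≠ y ∧ ∀ z : V, z ≠ x → z ≠ y → d2 G x z = d2 G y z

/-- The join `G + H` of two vertex-disjoint graphs. -/
def join (G : SimpleGraph V) (H : SimpleGraph W) : SimpleGraph (V ⊕ W) where
  Adj x y :=
    match x, y with
    | Sum.inl a, Sum.inl b => G.Adj a b
    | Sum.inr a, Sum.inr b => H.Adj a b
    | Sum.inl _, Sum.inr _ => True
    | Sum.inr _, Sum.inl _ => True
  symm := by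
    constructor
    rintro (a | a) (b | b) h
    · exact G.adj_symm h
    · trivial
    · trivial
    · exact H.adj_symm h
  loopless := by
    constructor
    rintro (a | a) h
    · exact G.irrefl h
    · exact H.irrefl h

/-- `K_1 + H`: the join of a one-vertex graph with `H`, i.e. `H` together with a
new universal vertex. -/
def K1join (H : SimpleGraph W) : SimpleGraph (Unit ⊕ W) :=
  join (⊥ : SimpleGraph Unit) H

lemma adj_inr_inr (H : SimpleGraph W) (a b : W) :
    (K1join H).Adj (Sum.inr a) (Sum.inr b) ↔ H.Adj a b := Iff.rfl

lemma adj_inl_inr (H : SimpleGraph W) (u : Unit) (b : W) :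
    (K1join H).Adj (Sum.inl u) (Sum.inr b) := trivial

lemma d2_inl_inr (H : SimpleGraph W) (u : Unit) (b : W) :
    d2 (K1join H) (Sum.inl u) (Sum.inr b) = 1 := by
  simp [d2, adj_inl_inr H u b]

lemma d2_inr_inr (H : SimpleGraph W) (a b : W) :
    d2 (K1join H) (Sum.inr a) (Sum.inr b) = d2 H a b := by
  simp only [d2, Sum.inr.injEq, adj_inr_inr]

lemma d2_comm (G : SimpleGraph V) (x y : V) : d2 G x y = d2 G y x := by
  unfold d2
  by_cases h : x = y
  · simp [h]
  · simp [h, Ne.symm h, G.adj_comm x y]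

lemma univ_isKAdjGen (G : SimpleGraph V) [Fintype V] :
    IsKAdjGen G 2 (univ : Finset V) := by
  intro x y hxy
  have hx : x ∈ (univ : Finset V).filter (fun w => d2 G x w ≠ d2 G y w) := by
    simp only [mem_filter, mem_univ, true_and]
    have : d2 G x x = 0 := by simp [d2]
    rw [this]
    unfold d2
    split_ifs with h1 h2 <;> simp_all
  have hy : y ∈ (univ : Finset V).filter (fun w => d2 G x w ≠ d2 G y w) := by
    simp only [mem_filter, mem_univ, true_and]
    have : d2 G y y = 0 := by simp [d2]
    rw [this]
    unfold d2
    split_ifs with h1 h2 <;> simp_all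
  calc 2 = ({x, y} : Finset V).card := by rw [card_insert_of_notMem (by simpa), card_singleton]
    _ ≤ _ := card_le_card (by
        intro z hz
        rcases mem_insert.mp hz with rfl | hz
        · exact hx
        · rw [mem_singleton.mp hz]; exact hy)

/-- Theorem 4.19: for any graph `H` of order `n ≥ 2`,
`adim_2(K₁ + H) ≤ adim_2(H) + 2`. -/
theorem adim_two_K1join_le [Fintype W] (H : SimpleGraph W)
    (h : 2 ≤ Fintype.card W) :
    adim (K1join H) 2 ≤ adim H 2 + 2 := by
  -- obtain a 2-adjacency basis B of H
  have hne : {n | ∃ S : Finset W, IsKAdjGen H 2 S ∧ S.card = n}.Nonempty :=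
    ⟨(univ : Finset W).card, univ, univ_isKAdjGen H, rfl⟩
  obtain ⟨B, hBgen, hBcard⟩ : ∃ S : Finset W, IsKAdjGen H 2 S ∧ S.card = adim H 2 :=
    Nat.sInf_mem hne
  -- W is nonempty
  have hW : Nonempty W := Fintype.card_pos_iff.mp (by omega)
  -- choose the extra vertex v
  have hv : ∃ v : W, ∀ b : W, ∃ w : W, (w ∈ B ∨ w = v) ∧ (w = b ∨ ¬ H.Adj b w) := by
    by_cases hex : ∃ b, b ∉ B ∧ ∀ w ∈ B, H.Adj b w
    · obtain ⟨b₀, hb₀1, hb₀2⟩ := hex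
      refine ⟨b₀, fun b => ?_⟩
      by_cases hbB : b ∈ B
      · exact ⟨b, Or.inl hbB, Or.inl rfl⟩
      by_cases hbv : b = b₀
      · exact ⟨b, Or.inr hbv, Or.inl rfl⟩
      by_cases hall : ∀ w ∈ B, H.Adj b w
      · -- then b and b₀ are not distinguished by B: contradiction
        exfalso
        have h2 := hBgen b b₀ hbv
        have : (B.filter (fun w => d2 H b w ≠ d2 H b₀ w)) = ∅ := by
          apply filter_eq_empty_iff.mpr
          intro w hw
          have hwb : w ≠ b := fun e => hbB (e ▸ hw)
          have hwb₀ : w ≠ b₀ := fun e => hb₀1 (e ▸ hw)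
          simp only [ne_eq, not_not]
          unfold d2
          rw [if_neg (Ne.symm hwb), if_neg (Ne.symm hwb₀),
            if_pos (hall w hw), if_pos (hb₀2 w hw)]
        rw [this] at h2
        simp at h2
      · push_neg at hall
        obtain ⟨w, hwB, hwadj⟩ := hall
        exact ⟨w, Or.inl hwB, Or.inr hwadj⟩
    · refine ⟨Classical.arbitrary W, fun b => ?_⟩
      by_cases hbB : b ∈ B
      · exact ⟨b, Or.inl hbB, Or.inl rfl⟩
      by_cases hbv : b = Classical.arbitrary W
      · exact ⟨b, Or.inr hbv, Or.inl rfl⟩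
      · push_neg at hex
        obtain ⟨w, hwB, hwadj⟩ := hex b hbB
        exact ⟨w, Or.inl hwB, Or.inr hwadj⟩
  obtain ⟨v, hv⟩ := hv
  -- the candidate generator for K1 + H
  set S : Finset (Unit ⊕ W) :=
    insert (Sum.inl ()) (insert (Sum.inr v) (B.image Sum.inr)) with hS
  -- a helper handling the mixed case
  have mixed : ∀ (u : Unit) (b : W), 2 ≤
      (S.filter (fun w => d2 (K1join H) (Sum.inl u) w ≠ d2 (K1join H) (Sum.inr b) w)).card := by
    intro u b
    obtain ⟨w, hwS, hwd⟩ := hv b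
    have hwS' : (Sum.inr w : Unit ⊕ W) ∈ S := by
      rcases hwS with hw | rfl
      · exact mem_insert_of_mem (mem_insert_of_mem (mem_image_of_mem _ hw))
      · exact mem_insert_of_mem (mem_insert_self _ _)
    have h1 : (Sum.inl u : Unit ⊕ W) ∈
        S.filter (fun w => d2 (K1join H) (Sum.inl u) w ≠ d2 (K1join H) (Sum.inr b) w) := by
      refine mem_filter.mpr ⟨mem_insert_self _ _, ?_⟩
      have e1 : d2 (K1join H) (Sum.inl u) (Sum.inl u) = 0 := by simp [d2]
      have e2 : d2 (K1join H) (Sum.inr b) (Sum.inl u) = 1 := by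
        rw [d2_comm]; exact d2_inl_inr H u b
      rw [e1, e2]; omega
    have h2 : (Sum.inr w : Unit ⊕ W) ∈
        S.filter (fun w => d2 (K1join H) (Sum.inl u) w ≠ d2 (K1join H) (Sum.inr b) w) := by
      refine mem_filter.mpr ⟨hwS', ?_⟩
      rw [d2_inl_inr, d2_inr_inr]
      have : d2 H b w ≠ 1 := by
        rcases hwd with rfl | hna
        · simp [d2]
        · unfold d2; split_ifs <;> omega
      omega
    calc 2 = ({Sum.inl u, Sum.inr w} : Finset (Unit ⊕ W)).card := by
            rw [card_insert_of_notMem (by simp), card_singleton]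
      _ ≤ _ := card_le_card (by
            intro z hz; rcases mem_insert.mp hz with rfl | hz
            · exact h1
            · rw [mem_singleton.mp hz]; exact h2)
  -- S is a 2-adjacency generator
  have hSgen : IsKAdjGen (K1join H) 2 S := by
    rintro (⟨⟩ | a) (⟨⟩ | b) hxy
    · exact absurd rfl hxy
    · exact mixed () b
    · have := mixed () a
      refine le_trans this (le_of_eq ?_)
      congr 1
      apply filter_congr
      intro z _
      simp [ne_comm]
    · -- both in H
      have h2 := hBgen a b (fun e => hxy (by rw [e]))
      calc 2 ≤ (B.filter (fun w => d2 H a w ≠ d2 H b w)).card := h2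
        _ = ((B.filter (fun w => d2 H a w ≠ d2 H b w)).image Sum.inr).card :=
            (card_image_of_injective _ Sum.inr_injective).symm
        _ ≤ _ := by
            apply card_le_card
            intro z hz
            obtain ⟨w, hw, rfl⟩ := mem_image.mp hz
            obtain ⟨hwB, hwd⟩ := mem_filter.mp hw
            refine mem_filter.mpr ⟨?_, ?_⟩
            · exact mem_insert_of_mem (mem_insert_of_mem (mem_image_of_mem _ hwB))
            · rw [d2_inr_inr, d2_inr_inr]; exact hwd
  -- conclude
  have hadim : adim (K1join H) 2 ≤ S.card := Nat.sInf_le ⟨S, hSgen, rfl⟩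
  have hcard : S.card ≤ B.card + 2 := by
    calc S.card ≤ (insert (Sum.inr v) (B.image Sum.inr)).card + 1 := card_insert_le _ _
      _ ≤ (B.image Sum.inr).card + 1 + 1 := by
          have := card_insert_le (Sum.inr v : Unit ⊕ W) (B.image Sum.inr)
          omega
      _ = B.card + 2 := by rw [card_image_of_injective _ Sum.inr_injective]
  omega

end
end AdjDim
end

section
/- Let G and H be finite simple graphs, each of order at least 2, and let k be an integer with 1 ≤ k ≤ C(G + H). Then the following assertions are equivalent: (i) there exist a k-adjacency basis A_G of G and a k-adjacency basis A_H of H such that |(A_G \ N_G(x)) ∪ (A_H \ N_H(y))| ≥ k for every x ∈ V(G) and every y ∈ V(H); (ii) adim_k(G + H) = adim_k(G) + adim_k(H). -/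
open Finset

namespace AdjDim

noncomputable section
open Classical

variable {V W : Type*}

section Aux

variable {G : SimpleGraph V} {H : SimpleGraph W}

lemma join_adj_inl_inl {x y : V} :
    (join G H).Adj (Sum.inl x) (Sum.inl y) ↔ G.Adj x y := Iff.rfl

lemma join_adj_inr_inr {x y : W} :
    (join G H).Adj (Sum.inr x) (Sum.inr y) ↔ H.Adj x y := Iff.rfl

lemma d2_join_inl_inl (x y : V) :
    d2 (join G H) (Sum.inl x) (Sum.inl y) = d2 G x y := by
  unfold d2
  simp [join_adj_inl_inl, Sum.inl.injEq]

lemma d2_join_inr_inr (x y : W) :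
    d2 (join G H) (Sum.inr x) (Sum.inr y) = d2 H x y := by
  unfold d2
  simp [join_adj_inr_inr, Sum.inr.injEq]

lemma d2_join_inl_inr (x : V) (y : W) :
    d2 (join G H) (Sum.inl x) (Sum.inr y) = 1 := by
  unfold d2
  rw [if_neg (by simp)]
  exact if_pos (show (join G H).Adj (Sum.inl x) (Sum.inr y) from trivial)

lemma d2_join_inr_inl (x : W) (y : V) :
    d2 (join G H) (Sum.inr x) (Sum.inl y) = 1 := by
  unfold d2
  rw [if_neg (by simp)]
  exact if_pos (show (join G H).Adj (Sum.inr x) (Sum.inl y) from trivial)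

lemma d2_ne_one_iff (x w : V) : d2 G x w ≠ 1 ↔ ¬ G.Adj x w := by
  unfold d2
  split_ifs with h1 h2
  · subst h1; simp [G.irrefl]
  · simp [h2]
  · simp [h2]

lemma disj_images (A : Finset V) (B : Finset W) :
    Disjoint (A.image Sum.inl) (B.image (Sum.inr : W → V ⊕ W)) := by
  rw [Finset.disjoint_left]
  rintro z hz hz'
  simp only [mem_image] at hz hz'
  obtain ⟨a, _, rfl⟩ := hz
  obtain ⟨b, _, h⟩ := hz'
  cases h

lemma card_filter_union_image (A : Finset V) (B : Finset W) (p : V ⊕ W → Prop)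
    [DecidablePred p] :
    ((A.image Sum.inl ∪ B.image Sum.inr).filter p).card
      = (A.filter (fun v => p (Sum.inl v))).card
        + (B.filter (fun w => p (Sum.inr w))).card := by
  rw [filter_union]
  rw [card_union_of_disjoint]
  · congr 1
    · rw [Finset.filter_image]
      exact card_image_of_injective _ Sum.inl_injective
    · rw [Finset.filter_image]
      exact card_image_of_injective _ Sum.inr_injective
  · exact (disj_images A B).mono (filter_subset _ _) (filter_subset _ _)

variable [Fintype V] [Fintype W]

/-- The key characterization of `k`-adjacency generators of the join. -/
lemma isKAdjGen_join_iff (k : ℕ) (A : Finset V) (B : Finset W) :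
    IsKAdjGen (join G H) k (A.image Sum.inl ∪ B.image Sum.inr) ↔
      IsKAdjGen G k A ∧ IsKAdjGen H k B ∧
        ∀ (x : V) (y : W),
          k ≤ (A.filter (fun w => ¬ G.Adj x w)).card
              + (B.filter (fun w => ¬ H.Adj y w)).card := by
  have hmixA : ∀ (x : V) (y : W),
      (A.filter (fun w => d2 (join G H) (Sum.inl x) (Sum.inl w)
        ≠ d2 (join G H) (Sum.inr y) (Sum.inl w))) = A.filter (fun w => ¬ G.Adj x w) := by
    intro x y
    apply filter_congr
    intro w _
    rw [d2_join_inl_inl, d2_join_inr_inl]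
    exact d2_ne_one_iff x w
  have hmixB : ∀ (x : V) (y : W),
      (B.filter (fun w => d2 (join G H) (Sum.inl x) (Sum.inr w)
        ≠ d2 (join G H) (Sum.inr y) (Sum.inr w))) = B.filter (fun w => ¬ H.Adj y w) := by
    intro x y
    apply filter_congr
    intro w _
    rw [d2_join_inl_inr, d2_join_inr_inr]
    rw [ne_comm]
    exact d2_ne_one_iff y w
  constructor
  · intro hS
    refine ⟨?_, ?_, ?_⟩
    · intro x y hxy
      have h := hS (Sum.inl x) (Sum.inl y) (by simpa using hxy)
      rw [card_filter_union_image] at h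
      have hB0 : (B.filter (fun w => d2 (join G H) (Sum.inl x) (Sum.inr w)
          ≠ d2 (join G H) (Sum.inl y) (Sum.inr w))) = ∅ := by
        apply filter_eq_empty_iff.2
        intro w _
        simp [d2_join_inl_inr]
      have hA0 : (A.filter (fun w => d2 (join G H) (Sum.inl x) (Sum.inl w)
          ≠ d2 (join G H) (Sum.inl y) (Sum.inl w)))
          = A.filter (fun w => d2 G x w ≠ d2 G y w) := by
        apply filter_congr
        intro w _
        rw [d2_join_inl_inl, d2_join_inl_inl]
      rw [hA0, hB0] at h
      simpa using h
    · intro x y hxy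
      have h := hS (Sum.inr x) (Sum.inr y) (by simpa using hxy)
      rw [card_filter_union_image] at h
      have hA0 : (A.filter (fun w => d2 (join G H) (Sum.inr x) (Sum.inl w)
          ≠ d2 (join G H) (Sum.inr y) (Sum.inl w))) = ∅ := by
        apply filter_eq_empty_iff.2
        intro w _
        simp [d2_join_inr_inl]
      have hB0 : (B.filter (fun w => d2 (join G H) (Sum.inr x) (Sum.inr w)
          ≠ d2 (join G H) (Sum.inr y) (Sum.inr w)))
          = B.filter (fun w => d2 H x w ≠ d2 H y w) := by
        apply filter_congr
        intro w _
        rw [d2_join_inr_inr, d2_join_inr_inr]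
      rw [hA0, hB0] at h
      simpa using h
    · intro x y
      have h := hS (Sum.inl x) (Sum.inr y) (by simp)
      rw [card_filter_union_image] at h
      rwa [hmixA, hmixB] at h
  · rintro ⟨hA, hB, hmix⟩
    rintro (x | x) (y | y) hxy
    · rw [card_filter_union_image]
      have hB0 : (B.filter (fun w => d2 (join G H) (Sum.inl x) (Sum.inr w)
          ≠ d2 (join G H) (Sum.inl y) (Sum.inr w))) = ∅ := by
        apply filter_eq_empty_iff.2
        intro w _
        simp [d2_join_inl_inr]
      have hA0 : (A.filter (fun w => d2 (join G H) (Sum.inl x) (Sum.inl w)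
          ≠ d2 (join G H) (Sum.inl y) (Sum.inl w)))
          = A.filter (fun w => d2 G x w ≠ d2 G y w) := by
        apply filter_congr
        intro w _
        rw [d2_join_inl_inl, d2_join_inl_inl]
      rw [hA0, hB0]
      simpa using hA x y (by simpa using hxy)
    · rw [card_filter_union_image, hmixA, hmixB]
      exact hmix x y
    · rw [card_filter_union_image]
      have h1 : (A.filter (fun w => d2 (join G H) (Sum.inr x) (Sum.inl w)
          ≠ d2 (join G H) (Sum.inl y) (Sum.inl w))) = A.filter (fun w => ¬ G.Adj y w) := by
        apply filter_congr
        intro w _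
        rw [d2_join_inr_inl, d2_join_inl_inl, ne_comm]
        exact d2_ne_one_iff y w
      have h2 : (B.filter (fun w => d2 (join G H) (Sum.inr x) (Sum.inr w)
          ≠ d2 (join G H) (Sum.inl y) (Sum.inr w))) = B.filter (fun w => ¬ H.Adj x w) := by
        apply filter_congr
        intro w _
        rw [d2_join_inr_inr, d2_join_inl_inr]
        exact d2_ne_one_iff x w
      rw [h1, h2]
      have := hmix y x
      omega
    · rw [card_filter_union_image]
      have hA0 : (A.filter (fun w => d2 (join G H) (Sum.inr x) (Sum.inl w)
          ≠ d2 (join G H) (Sum.inr y) (Sum.inl w))) = ∅ := by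
        apply filter_eq_empty_iff.2
        intro w _
        simp [d2_join_inr_inl]
      have hB0 : (B.filter (fun w => d2 (join G H) (Sum.inr x) (Sum.inr w)
          ≠ d2 (join G H) (Sum.inr y) (Sum.inr w)))
          = B.filter (fun w => d2 H x w ≠ d2 H y w) := by
        apply filter_congr
        intro w _
        rw [d2_join_inr_inr, d2_join_inr_inr]
      rw [hA0, hB0]
      simpa using hB x y (by simpa using hxy)

lemma decomp_sum (S : Finset (V ⊕ W)) :
    S = (univ.filter (fun v => Sum.inl v ∈ S)).image Sum.inl
        ∪ (univ.filter (fun w => Sum.inr w ∈ S)).image Sum.inr := by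
  ext z
  cases z <;> simp

lemma adim_le_of_gen {G : SimpleGraph V} (k : ℕ) {S : Finset V}
    (h : IsKAdjGen G k S) : adim G k ≤ S.card :=
  Nat.sInf_le ⟨S, h, rfl⟩

lemma exists_basis {G : SimpleGraph V} (k : ℕ) {S : Finset V}
    (h : IsKAdjGen G k S) : ∃ B : Finset V, IsKAdjBasis G k B := by
  have hne : {n | ∃ S : Finset V, IsKAdjGen G k S ∧ S.card = n}.Nonempty :=
    ⟨S.card, S, h, rfl⟩
  obtain ⟨B, hB, hcard⟩ := Nat.sInf_mem hne
  exact ⟨B, hB, hcard⟩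

lemma cmin_le {G : SimpleGraph V} {x y : V} (hxy : x ≠ y) :
    Cmin G ≤ (CSet G x y).card :=
  Nat.sInf_le ⟨x, y, hxy, rfl⟩

lemma card_union_image (A : Finset V) (B : Finset W) :
    (A.image Sum.inl ∪ B.image (Sum.inr : W → V ⊕ W)).card = A.card + B.card := by
  rw [card_union_of_disjoint (disj_images A B),
    card_image_of_injective _ Sum.inl_injective,
    card_image_of_injective _ Sum.inr_injective]

lemma exists_decomp (S : Finset (V ⊕ W)) :
    ∃ (A : Finset V) (B : Finset W), S = A.image Sum.inl ∪ B.image Sum.inr :=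
  ⟨_, _, decomp_sum S⟩

end Aux

/-- Theorem 4.28: `adim_k(G + H) = adim_k(G) + adim_k(H)` if and only if there
exist `k`-adjacency bases `A` of `G` and `B` of `H` such that
`|(A \\ N_G(x)) ∪ (B \\ N_H(y))| ≥ k` for all `x ∈ V(G)`, `y ∈ V(H)`. -/
theorem adim_join_eq_add_iff [Fintype V] [Fintype W] (G : SimpleGraph V)
    (H : SimpleGraph W) (hG : 2 ≤ Fintype.card V) (hH : 2 ≤ Fintype.card W)
    (k : ℕ) (hk1 : 1 ≤ k) (hk2 : k ≤ Cmin (join G H)) :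
    (∃ (A : Finset V) (B : Finset W), IsKAdjBasis G k A ∧ IsKAdjBasis H k B ∧
        ∀ (x : V) (y : W),
          k ≤ ((A.filter (fun w => ¬ G.Adj x w)).image Sum.inl ∪
                (B.filter (fun w => ¬ H.Adj y w)).image
                  (Sum.inr : W → V ⊕ W)).card) ↔
      adim (join G H) k = adim G k + adim H k := by
  -- `univ` is a `k`-adjacency generator of the join
  have hgenJ : IsKAdjGen (join G H) k (univ : Finset (V ⊕ W)) := by
    intro x y hxy
    exact hk2.trans (cmin_le hxy)
  constructor
  · rintro ⟨A, B, ⟨hAgen, hAcard⟩, ⟨hBgen, hBcard⟩, hcond⟩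
    have hcond' : ∀ (x : V) (y : W),
        k ≤ (A.filter (fun w => ¬ G.Adj x w)).card
            + (B.filter (fun w => ¬ H.Adj y w)).card := by
      intro x y
      have h := hcond x y
      rwa [card_union_image] at h
    have hgen : IsKAdjGen (join G H) k (A.image Sum.inl ∪ B.image Sum.inr) :=
      (isKAdjGen_join_iff k A B).2 ⟨hAgen, hBgen, hcond'⟩
    have hle : adim (join G H) k ≤ adim G k + adim H k := by
      have h := adim_le_of_gen k hgen
      rwa [card_union_image, hAcard, hBcard] at h
    have hge : adim G k + adim H k ≤ adim (join G H) k := by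
      obtain ⟨S, hSgen, hScard⟩ := exists_basis k hgenJ
      obtain ⟨A0, B0, hSdec⟩ := exists_decomp S
      rw [hSdec] at hSgen
      obtain ⟨hA0, hB0, -⟩ := (isKAdjGen_join_iff k A0 B0).1 hSgen
      have h1 : adim G k ≤ A0.card := adim_le_of_gen k hA0
      have h2 : adim H k ≤ B0.card := adim_le_of_gen k hB0
      have h3 := card_union_image A0 B0
      rw [← hSdec] at h3
      omega
    omega
  · intro heq
    obtain ⟨S, hSgen, hScard⟩ := exists_basis k hgenJ
    obtain ⟨A0, B0, hSdec⟩ := exists_decomp S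
    rw [hSdec] at hSgen
    obtain ⟨hA0, hB0, hmix⟩ := (isKAdjGen_join_iff k A0 B0).1 hSgen
    have h1 : adim G k ≤ A0.card := adim_le_of_gen k hA0
    have h2 : adim H k ≤ B0.card := adim_le_of_gen k hB0
    have h3 := card_union_image A0 B0
    rw [← hSdec] at h3
    refine ⟨A0, B0, ⟨hA0, by omega⟩, ⟨hB0, by omega⟩, ?_⟩
    intro x y
    rw [card_union_image]
    exact hmix x y

end
end AdjDim
end
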